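/- Let X be supported in [a, b] with mean μ and mean absolute deviation d. Then for any t, E[X | X ≥ t] ≤ b; and for any μ − d(b−μ)/(2(b−μ) − d) ≤ t < μ, there is a feasible two-point distribution with support {(b(d−2μ)+2μ²)/(−2b+d+2μ), b}, probabilities 1 − d/(2(b−μ)) and d/(2(b−μ)), having mean μ and MAD d, whose conditional expectation given X ≥ t equals b. -/

import Mathlib

open MeasureTheory

lemma my_integrable_dirac (f : ℝ → ℝ) (x : ℝ) : Integrable f (Measure.dirac x) := by
  have h : f =ᵐ[Measure.dirac x] fun _ => f x := by
    rw [MeasureTheory.ae_dirac_eq]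
    exact Filter.eventually_pure.2 rfl
  exact (integrable_const (f x)).congr h.symm

lemma my_integral_two (f : ℝ → ℝ) (c1 c2 : ENNReal) (hc1 : c1 ≠ ⊤) (hc2 : c2 ≠ ⊤)
    (y1 y2 : ℝ) :
    ∫ x, f x ∂(c1 • Measure.dirac y1 + c2 • Measure.dirac y2) =
      c1.toReal * f y1 + c2.toReal * f y2 := by
  rw [integral_add_measure ((my_integrable_dirac f y1).smul_measure hc1)
    ((my_integrable_dirac f y2).smul_measure hc2), integral_smul_measure,
    integral_smul_measure, integral_dirac, integral_dirac]
  simp [mul_comm]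

theorem stmt4 (a b m d : ℝ) (hd : 0 < d) (hdb : d < 2 * (b - m)) :
    (∀ (P : Measure ℝ), IsProbabilityMeasure P → (∀ᵐ x ∂P, x ∈ Set.Icc a b) →
        Integrable (fun x => x) P → ∀ t : ℝ, 0 < (P {x : ℝ | t ≤ x}).toReal →
        (∫ x in {x : ℝ | t ≤ x}, x ∂P) / (P {x : ℝ | t ≤ x}).toReal ≤ b) ∧
    (let x1 := (b * (d - 2 * m) + 2 * m ^ 2) / (-2 * b + d + 2 * m)
     let p := 1 - d / (2 * (b - m))
     let Q : Measure ℝ := ENNReal.ofReal p • Measure.dirac x1 +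
       ENNReal.ofReal (1 - p) • Measure.dirac b
     a ≤ x1 →
       (∫ x, x ∂Q = m) ∧ (∫ x, |x - m| ∂Q = d) ∧
       ∀ t, m - d * (b - m) / (2 * (b - m) - d) ≤ t → t < m → x1 < t → t ≤ b →
         (∫ x in {x : ℝ | t ≤ x}, x ∂Q) / (Q {x : ℝ | t ≤ x}).toReal = b) := by
  have hbm : m < b := by nlinarith
  constructor
  · intro P hP hae hInt t ht
    have hSeq : {x : ℝ | t ≤ x} = Set.Ici t := rfl
    rw [div_le_iff₀ ht]
    have h1 : ∫ x in {x : ℝ | t ≤ x}, x ∂P ≤ ∫ x in {x : ℝ | t ≤ x}, b ∂P := by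
      apply integral_mono_ae (hInt.restrict) (integrable_const b)
      exact ae_restrict_of_ae (hae.mono fun x hx => hx.2)
    have h2 : ∫ x in {x : ℝ | t ≤ x}, (b : ℝ) ∂P = (P {x : ℝ | t ≤ x}).toReal * b := by
      rw [setIntegral_const]; rfl
    linarith [h1, h2.symm ▸ h1]
  · intro x1 p Q hax1
    have hbm2 : (0:ℝ) < 2 * (b - m) := by linarith
    have hp0 : 0 < p := by
      have : d / (2 * (b - m)) < 1 := (div_lt_one hbm2).2 hdb
      simp only [p]; linarith
    have hp1 : 1 - p = d / (2 * (b - m)) := by simp [p]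
    have h1p0 : 0 < 1 - p := by rw [hp1]; positivity
    have hden : -2 * b + d + 2 * m ≠ 0 := by intro h; nlinarith
    have hDneg : -2 * b + d + 2 * m < 0 := by nlinarith
    have hx1eq : x1 * (-2 * b + d + 2 * m) = b * (d - 2 * m) + 2 * m ^ 2 := by
      simp only [x1]; exact div_mul_cancel₀ _ hden
    have hpeq : p * (2 * (b - m)) = 2 * (b - m) - d := by
      simp only [p]; rw [sub_mul, div_mul_cancel₀ _ hbm2.ne', one_mul]
    have hC : (2 * (b - m)) * (-2 * b + d + 2 * m) ≠ 0 := mul_ne_zero hbm2.ne' hden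
    have hx1m : x1 < m := by nlinarith [hx1eq, hDneg, mul_pos hd (sub_pos.2 hbm)]
    have hofp : (ENNReal.ofReal p).toReal = p := ENNReal.toReal_ofReal hp0.le
    have hof1p : (ENNReal.ofReal (1 - p)).toReal = 1 - p := ENNReal.toReal_ofReal h1p0.le
    have key : ∀ f : ℝ → ℝ, ∫ x, f x ∂Q = p * f x1 + (1 - p) * f b := by
      intro f
      rw [show Q = ENNReal.ofReal p • Measure.dirac x1 + ENNReal.ofReal (1 - p) • Measure.dirac b from rfl]
      rw [my_integral_two f _ _ ENNReal.ofReal_ne_top ENNReal.ofReal_ne_top, hofp, hof1p]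
    have hmean : ∫ x, x ∂Q = m := by
      rw [key (fun x => x)]
      have h0 : (p * x1 + (1 - p) * b - m) * ((2 * (b - m)) * (-2 * b + d + 2 * m)) = 0 := by
        linear_combination (p * (2 * (b - m))) * hx1eq +
          ((b * (d - 2 * m) + 2 * m ^ 2) - b * (-2 * b + d + 2 * m)) * hpeq
      have := (mul_eq_zero.mp h0).resolve_right hC
      linarith
    refine ⟨hmean, ?_, ?_⟩
    · rw [key (fun x => |x - m|)]
      rw [abs_of_nonpos (by linarith), abs_of_nonneg (by linarith)]
      have h0 : (p * -(x1 - m) + (1 - p) * (b - m) - d) *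
          ((2 * (b - m)) * (-2 * b + d + 2 * m)) = 0 := by
        linear_combination (-(p * (2 * (b - m)))) * hx1eq +
          (m * (-2 * b + d + 2 * m) - (b * (d - 2 * m) + 2 * m ^ 2) -
            (b - m) * (-2 * b + d + 2 * m)) * hpeq
      have := (mul_eq_zero.mp h0).resolve_right hC
      linarith
    · intro t _ htm hx1t htb
      classical
      have hS : {x : ℝ | t ≤ x} = Set.Ici t := rfl
      have hQS' : Q (Set.Ici t) = ENNReal.ofReal (1 - p) := by
        rw [show Q = ENNReal.ofReal p • Measure.dirac x1 + ENNReal.ofReal (1 - p) • Measure.dirac b from rfl]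
        rw [Measure.add_apply, Measure.smul_apply, Measure.smul_apply,
          Measure.dirac_apply' _ measurableSet_Ici, Measure.dirac_apply' _ measurableSet_Ici]
        simp only [Set.indicator_apply, Set.mem_Ici]
        rw [if_neg (not_le.2 hx1t), if_pos htb]
        simp
      have hQS : (Q {x : ℝ | t ≤ x}).toReal = 1 - p := by
        rw [hS, hQS', hof1p]
      have hint : ∫ x in {x : ℝ | t ≤ x}, x ∂Q = (1 - p) * b := by
        rw [show Q = ENNReal.ofReal p • Measure.dirac x1 + ENNReal.ofReal (1 - p) • Measure.dirac b from rfl]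
        rw [hS, Measure.restrict_add, Measure.restrict_smul, Measure.restrict_smul,
          integral_add_measure (((my_integrable_dirac (fun x => x) x1).restrict).smul_measure ENNReal.ofReal_ne_top)
            (((my_integrable_dirac (fun x => x) b).restrict).smul_measure ENNReal.ofReal_ne_top),
          integral_smul_measure, integral_smul_measure,
          setIntegral_dirac, setIntegral_dirac]
        rw [if_neg (by simpa using not_le.2 hx1t), if_pos (by simpa using htb)]
        simp [hofp, hof1p]
      rw [hint, hQS, mul_comm, mul_div_assoc, div_self h1p0.ne', mul_one]
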